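/- arXiv:1910.10512 — 3 statements merged into one kernel-verified Lean document; each statement's English description precedes it below -/
import Mathlib

section
/- In the MLVSBM, if the individual latent variables Z^I are independent of the organizational latent variables Z^O, then γ_{kl} = γ_{kl'} for all k and all l, l' ∈ {1,...,Q_O}, provided π_l > 0 for all l. -/
open Finset

/-- In the MLVSBM, if the individual latent variables Z^I are independent of
the organizational latent variables Z^O, then γ_{kl} = γ_{kl'} for all k and all l, l',
provided π_l > 0 for all l. -/
theorem mlvsbm_indep_implies_gamma_const
    (nI nO QI QO : ℕ) (hnI : 0 < nI)
    (aff : Fin nI → Fin nO)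
    (π : Fin QO → ℝ) (γ : Fin QI → Fin QO → ℝ)
    (hπpos : ∀ l, 0 < π l) (hπ1 : ∑ l, π l = 1)
    (hγ0 : ∀ k l, 0 ≤ γ k l) (hγ1 : ∀ l, ∑ k, γ k l = 1)
    (P : (Fin nI → Fin QI) → (Fin nO → Fin QO) → ℝ)
    (hP : ∀ zI zO, P zI zO = (∏ j, π (zO j)) * ∏ i, γ (zI i) (zO (aff i)))
    (hindep : ∀ zI zO, P zI zO
      = (∑ wO : Fin nO → Fin QO, P zI wO) * (∑ wI : Fin nI → Fin QI, P wI zO)) :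
    ∀ k l l', γ k l = γ k l' := by
  intro k l l'
  -- marginal over individual configurations
  have hS : ∀ zO : Fin nO → Fin QO,
      (∑ wI : Fin nI → Fin QI, P wI zO) = ∏ j, π (zO j) := by
    intro zO
    calc (∑ wI : Fin nI → Fin QI, P wI zO)
        = (∏ j, π (zO j)) * ∑ wI : Fin nI → Fin QI, ∏ i, γ (wI i) (zO (aff i)) := by
          simp only [hP]; rw [Finset.mul_sum]
      _ = (∏ j, π (zO j)) * ∏ i : Fin nI, ∑ k', γ k' (zO (aff i)) := by
          rw [Fintype.prod_sum (fun i k' => γ k' (zO (aff i)))]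
      _ = ∏ j, π (zO j) := by simp [hγ1]
  -- key identity for constant configurations
  have key : ∀ m : Fin QO, γ k m ^ nI =
      ∑ wO : Fin nO → Fin QO, P (fun _ => k) wO := by
    intro m
    have h := hindep (fun _ => k) (fun _ => m)
    rw [hS, hP] at h
    simp only [Finset.prod_const, Finset.card_univ, Fintype.card_fin] at h
    have hπm : (0 : ℝ) < π m ^ nO := pow_pos (hπpos m) nO
    rw [mul_comm (π m ^ nO)] at h
    exact mul_right_cancel₀ hπm.ne' h
  have h1 := key l
  have h2 := key l'
  have : γ k l ^ nI = γ k l' ^ nI := by rw [h1, h2]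
  exact (pow_left_inj₀ (hγ0 k l) (hγ0 k l') hnI.ne').mp this
end

section
/- In the SBM, define u_i = P(X_{12} = 1, X_{13} = 1, ..., X_{1,i+1} = 1) for 1 ≤ i ≤ 2Q-1 and u_0 = 1. Then u_i = Σ_{l=1}^{Q} τ_l^i π_l where τ_l = Σ_{l'} α_{ll'} π_{l'}. Consequently, the (Q+1)×Q Hankel-type matrix M with M_{ij} = u_{i+j-2} factorizes as M (restricted to its first Q rows) = R D_π R', where R is the Vandermonde matrix R_{il} = τ_l^{i-1} and D_π = diag(π). -/
open Finset Matrix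


lemma sbm_key (Q : ℕ) (π : Fin Q → ℝ) (α : Fin Q → Fin Q → ℝ)
    (hπ1 : ∑ l, π l = 1) :
    ∀ (m i : ℕ) (h : i ≤ m) (l : Fin Q),
      ∑ w : Fin m → Fin Q, (∏ j, π (w j)) * ∏ t : Fin i, α l (w (Fin.castLE h t))
        = (∑ l', α l l' * π l') ^ i := by
  intro m
  induction m with
  | zero =>
    intro i h l
    interval_cases i
    simp
  | succ m ih =>
    intro i h l
    rw [← (Fin.consEquiv (fun _ : Fin (m+1) => Fin Q)).sum_comp]
    rw [Fintype.sum_prod_type]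
    match i with
    | 0 =>
      simp only [Finset.univ_eq_empty, Finset.prod_empty, mul_one, pow_zero]
      have : ∀ v : Fin Q, ∑ w : Fin m → Fin Q,
          (∏ j, π ((Fin.consEquiv (fun _ : Fin (m+1) => Fin Q)) (v, w) j)) = π v := by
        intro v
        have := ih 0 (Nat.zero_le m) l
        simp only [Finset.univ_eq_empty, Finset.prod_empty, mul_one, pow_zero] at this
        calc ∑ w : Fin m → Fin Q, (∏ j, π ((Fin.consEquiv (fun _ : Fin (m+1) => Fin Q)) (v, w) j))
            = ∑ w : Fin m → Fin Q, π v * ∏ j, π (w j) := by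
              apply Finset.sum_congr rfl; intro w _
              simp [Fin.consEquiv, Fin.prod_univ_succ]
          _ = π v * ∑ w : Fin m → Fin Q, ∏ j, π (w j) := by rw [Finset.mul_sum]
          _ = π v := by rw [this, mul_one]
      rw [Finset.sum_congr rfl (fun v _ => this v), hπ1]
    | i + 1 =>
      have hi : i ≤ m := by omega
      have step : ∀ v : Fin Q, ∑ w : Fin m → Fin Q,
          (∏ j, π ((Fin.consEquiv (fun _ : Fin (m+1) => Fin Q)) (v, w) j)) *
            ∏ t : Fin (i+1), α l ((Fin.consEquiv (fun _ : Fin (m+1) => Fin Q)) (v, w) (Fin.castLE h t))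
          = α l v * π v * (∑ l', α l l' * π l') ^ i := by
        intro v
        have key : ∀ w : Fin m → Fin Q,
            (∏ j, π ((Fin.consEquiv (fun _ : Fin (m+1) => Fin Q)) (v, w) j)) *
              ∏ t : Fin (i+1), α l ((Fin.consEquiv (fun _ : Fin (m+1) => Fin Q)) (v, w) (Fin.castLE h t))
            = α l v * π v * ((∏ j, π (w j)) * ∏ t : Fin i, α l (w (Fin.castLE hi t))) := by
          intro w
          have h1 : (∏ j, π ((Fin.consEquiv (fun _ : Fin (m+1) => Fin Q)) (v, w) j))
              = π v * ∏ j, π (w j) := by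
            simp [Fin.consEquiv, Fin.prod_univ_succ]
          have h2 : (∏ t : Fin (i+1), α l ((Fin.consEquiv (fun _ : Fin (m+1) => Fin Q)) (v, w) (Fin.castLE h t)))
              = α l v * ∏ t : Fin i, α l (w (Fin.castLE hi t)) := by
            rw [Fin.prod_univ_succ]
            have e1 : ((Fin.consEquiv (fun _ : Fin (m+1) => Fin Q)) (v, w) (Fin.castLE h (0 : Fin (i+1)))) = v := by
              simp [Fin.consEquiv]
            have e2 : ∀ t : Fin i, ((Fin.consEquiv (fun _ : Fin (m+1) => Fin Q)) (v, w) (Fin.castLE h (Fin.succ t))) = w (Fin.castLE hi t) := by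
              intro t
              have : Fin.castLE h t.succ = Fin.succ (Fin.castLE hi t) := rfl
              rw [this]
              simp [Fin.consEquiv]
            rw [e1]
            rw [Finset.prod_congr rfl (fun t _ => congrArg (α l) (e2 t))]
          rw [h1, h2]; ring
        rw [Finset.sum_congr rfl (fun w _ => key w), ← Finset.mul_sum, ih i hi l]
      rw [Finset.sum_congr rfl (fun v _ => step v), ← Finset.sum_mul, pow_succ']

/-- In the SBM, with u_i the probability that node 0 is linked to nodes
1, ..., i (and u_0 = 1), one has u_i = ∑_l τ_l^i π_l with τ_l = ∑_{l'} α_{ll'} π_{l'};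
consequently the (first Q rows of the) Hankel-type matrix M_{ab} = u_{a+b} factorize as
M = R D_π Rᵀ, where R is the Vandermonde matrix R_{al} = τ_l^a and D_π = diag(π). -/
theorem sbm_hankel_factorization
    (n Q : ℕ) (hQ : 0 < Q) (hn : 2 * Q ≤ n)
    (π : Fin Q → ℝ) (α : Fin Q → Fin Q → ℝ)
    (hπ1 : ∑ l, π l = 1)
    (u : ℕ → ℝ)
    (hu : ∀ i : ℕ, ∀ hi : i ≤ 2 * Q - 1,
      u i = ∑ z : Fin n → Fin Q,
        (∏ m, π (z m)) *
          ∏ t : Fin i, α (z ⟨0, by omega⟩) (z ⟨t.val + 1, by have := t.isLt; omega⟩)) :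
    (∀ i : ℕ, i ≤ 2 * Q - 1 → u i = ∑ l, (∑ l', α l l' * π l') ^ i * π l)
    ∧ (∀ a b : Fin Q, u ((a : ℕ) + (b : ℕ))
        = ((Matrix.of fun (i l : Fin Q) => (∑ l', α l l' * π l') ^ (i : ℕ))
            * Matrix.diagonal π
            * (Matrix.of fun (i l : Fin Q) => (∑ l', α l l' * π l') ^ (i : ℕ))ᵀ) a b) := by
  obtain ⟨n', rfl⟩ : ∃ n', n = n' + 1 := ⟨n - 1, by omega⟩
  have part1 : ∀ i : ℕ, i ≤ 2 * Q - 1 → u i = ∑ l, (∑ l', α l l' * π l') ^ i * π l := by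
    intro i hi
    have hin : i ≤ n' := by omega
    rw [hu i hi]
    rw [← (Fin.consEquiv (fun _ : Fin (n'+1) => Fin Q)).sum_comp]
    rw [Fintype.sum_prod_type]
    have step : ∀ v : Fin Q,
        (∑ w : Fin n' → Fin Q,
          (∏ m, π ((Fin.consEquiv (fun _ : Fin (n'+1) => Fin Q)) (v, w) m)) *
            ∏ t : Fin i, α ((Fin.consEquiv (fun _ : Fin (n'+1) => Fin Q)) (v, w) ⟨0, by omega⟩)
              ((Fin.consEquiv (fun _ : Fin (n'+1) => Fin Q)) (v, w) ⟨t.val + 1, by have := t.isLt; omega⟩))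
        = π v * (∑ l', α v l' * π l') ^ i := by
      intro v
      have key : ∀ w : Fin n' → Fin Q,
          (∏ m, π ((Fin.consEquiv (fun _ : Fin (n'+1) => Fin Q)) (v, w) m)) *
            ∏ t : Fin i, α ((Fin.consEquiv (fun _ : Fin (n'+1) => Fin Q)) (v, w) ⟨0, by omega⟩)
              ((Fin.consEquiv (fun _ : Fin (n'+1) => Fin Q)) (v, w) ⟨t.val + 1, by have := t.isLt; omega⟩)
          = π v * ((∏ j, π (w j)) * ∏ t : Fin i, α v (w (Fin.castLE hin t))) := by
        intro w
        have h1 : (∏ m, π ((Fin.consEquiv (fun _ : Fin (n'+1) => Fin Q)) (v, w) m))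
            = π v * ∏ j, π (w j) := by
          simp [Fin.consEquiv, Fin.prod_univ_succ]
        have e0 : ((Fin.consEquiv (fun _ : Fin (n'+1) => Fin Q)) (v, w) ⟨0, by omega⟩) = v := by
          have : (⟨0, by omega⟩ : Fin (n'+1)) = 0 := rfl
          rw [this]; simp [Fin.consEquiv]
        have e2 : ∀ t : Fin i,
            ((Fin.consEquiv (fun _ : Fin (n'+1) => Fin Q)) (v, w)
              ⟨t.val + 1, by have := t.isLt; omega⟩) = w (Fin.castLE hin t) := by
          intro t
          have : (⟨t.val + 1, by have := t.isLt; omega⟩ : Fin (n'+1))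
              = Fin.succ (Fin.castLE hin t) := rfl
          rw [this]; simp [Fin.consEquiv]
        rw [h1, e0, Finset.prod_congr rfl (fun t _ => congrArg (α v) (e2 t))]
        ring
      rw [Finset.sum_congr rfl (fun w _ => key w), ← Finset.mul_sum,
        sbm_key Q π α hπ1 n' i hin v]
    rw [Finset.sum_congr rfl (fun v _ => step v)]
    exact Finset.sum_congr rfl (fun l _ => mul_comm _ _)
  refine ⟨part1, fun a b => ?_⟩
  have hab : (a : ℕ) + (b : ℕ) ≤ 2 * Q - 1 := by
    have := a.isLt; have := b.isLt; omega
  rw [part1 _ hab, Matrix.mul_apply]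
  apply Finset.sum_congr rfl
  intro l _
  rw [Matrix.mul_diagonal]
  simp only [Matrix.of_apply, Matrix.transpose_apply, pow_add]
  ring
end

section
/- Let M be the (Q+1)×Q matrix with entries M_{ij} = Σ_{l=1}^Q τ_l^{i-1} π_l τ_l^{j-1}, where the τ_l are pairwise distinct and π_l > 0. Define δ_k = det(M_{-k}) where M_{-k} is M with its k-th row removed, and the polynomial B(x) = Σ_{k=0}^{Q} (-1)^{k+Q} δ_{k+1} x^k. Then B has degree exactly Q and B(τ_l) = 0 for every l = 1,...,Q; hence the roots of B are exactly τ_1,...,τ_Q. -/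
open Finset Polynomial

/-- With M the (Q+1)×Q moment matrix M_{ij} = ∑_l τ_l^{i-1} π_l τ_l^{j-1},
δ_k = det(M with k-th row removed) and B(x) = ∑_{k=0}^{Q} (-1)^{k+Q} δ_{k+1} x^k,
the polynomial B has degree exactly Q and B(τ_l) = 0 for every l; hence the roots of B
are exactly τ_1, ..., τ_Q. -/
theorem hankel_minor_polynomial_roots
    (Q : ℕ) (hQ : 0 < Q) (τ π : Fin Q → ℝ)
    (hτ : Function.Injective τ) (hπ : ∀ l, 0 < π l)
    (M : Matrix (Fin (Q + 1)) (Fin Q) ℝ)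
    (hM : M = Matrix.of fun (i : Fin (Q + 1)) (j : Fin Q) => ∑ l, τ l ^ (i : ℕ) * π l * τ l ^ (j : ℕ))
    (δ : Fin (Q + 1) → ℝ)
    (hδ : ∀ k, δ k = (M.submatrix (Fin.succAbove k) id).det)
    (B : Polynomial ℝ)
    (hB : B = ∑ k : Fin (Q + 1), C ((-1) ^ ((k : ℕ) + Q) * δ k) * X ^ (k : ℕ)) :
    B.degree = Q ∧ (∀ l, B.eval (τ l) = 0) ∧ (∀ x, B.eval x = 0 ↔ ∃ l, τ l = x) := by
  classical
  set W : Matrix (Fin Q) (Fin Q) ℝ := Matrix.vandermonde τ with hW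
  have hWdet : W.det ≠ 0 := by
    rw [hW, Matrix.det_vandermonde]
    refine Finset.prod_ne_zero_iff.mpr fun i _ => Finset.prod_ne_zero_iff.mpr fun j hj => ?_
    refine sub_ne_zero.mpr fun h => ?_
    exact absurd (hτ h) (Finset.mem_Ioi.mp hj).ne'
  -- δ at the last index is nonzero
  have hDW : ∀ (m j : Fin Q), (Matrix.diagonal π * W) m j = π m * τ m ^ (j : ℕ) := by
    intro m j; rw [Matrix.diagonal_mul]; simp [hW]
  have hsub : M.submatrix (Fin.last Q).succAbove id = W.transpose * (Matrix.diagonal π * W) := by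
    ext i j
    rw [Matrix.mul_apply]
    simp only [Matrix.transpose_apply, hDW]
    simp only [Matrix.submatrix_apply, Fin.succAbove_last, id_eq, hM, Matrix.of_apply,
      Fin.coe_castSucc, hW, Matrix.vandermonde]
    refine Finset.sum_congr rfl fun m _ => ?_
    ring
  have hδlast : δ (Fin.last Q) ≠ 0 := by
    rw [hδ, hsub, Matrix.det_mul, Matrix.det_mul, Matrix.det_diagonal, Matrix.det_transpose]
    have hπprod : ∏ l, π l ≠ 0 := Finset.prod_ne_zero_iff.mpr fun l _ => (hπ l).ne'
    exact mul_ne_zero hWdet (mul_ne_zero hπprod hWdet)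
  -- coefficient of degree Q
  have hcoeffQ : B.coeff Q = δ (Fin.last Q) := by
    rw [hB, Polynomial.finset_sum_coeff]
    rw [Finset.sum_eq_single (Fin.last Q)]
    · rw [Fin.val_last, Polynomial.coeff_C_mul, Polynomial.coeff_X_pow, if_pos rfl, mul_one,
        ← two_mul, pow_mul]
      norm_num
    · intro k _ hk
      have : (Q : ℕ) ≠ (k : ℕ) := by
        intro h
        exact hk (Fin.ext (by simp [← h]))
      rw [Polynomial.coeff_C_mul, Polynomial.coeff_X_pow, if_neg this, mul_zero]
    · intro h; exact absurd (Finset.mem_univ _) h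
  have hdegle : B.degree ≤ Q := by
    rw [hB]
    refine (Polynomial.degree_sum_le _ _).trans ?_
    refine Finset.sup_le fun k _ => ?_
    refine (Polynomial.degree_C_mul_X_pow_le _ _).trans ?_
    exact_mod_cast Nat.cast_le.mpr (Nat.lt_succ_iff.mp k.isLt)
  have hdeg : B.degree = Q :=
    Polynomial.degree_eq_of_le_of_coeff_ne_zero hdegle (by rw [hcoeffQ]; exact hδlast)
  have hBne : B ≠ 0 := fun h => by
    rw [h, Polynomial.degree_zero] at hdeg
    exact (WithBot.bot_ne_coe (a := (Q : ℕ))) hdeg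
  -- the augmented matrix and evaluation
  set N : ℝ → Matrix (Fin (Q + 1)) (Fin (Q + 1)) ℝ :=
    fun x => Matrix.of fun i => Fin.snoc (fun j => M i j) (x ^ (i : ℕ)) with hN
  have hNcast : ∀ x i (j : Fin Q), N x i j.castSucc = M i j := by
    intro x i j; simp [hN]
  have hNlast : ∀ x i, N x i (Fin.last Q) = x ^ (i : ℕ) := by
    intro x i; simp [hN]
  have hevalN : ∀ x, B.eval x = (N x).det := by
    intro x
    rw [Matrix.det_succ_column (N x) (Fin.last Q), hB]
    rw [Polynomial.eval_finset_sum]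
    refine Finset.sum_congr rfl fun i _ => ?_
    have hsubm : (N x).submatrix i.succAbove (Fin.last Q).succAbove
        = M.submatrix i.succAbove id := by
      ext a b
      simp only [Matrix.submatrix_apply, Fin.succAbove_last, id_eq]
      exact hNcast x _ b
    rw [hsubm, hNlast, ← hδ]
    simp [Fin.val_last]
    ring
  -- roots at τ l
  have hroot : ∀ l, B.eval (τ l) = 0 := by
    intro l
    rw [hevalN]
    rw [← Matrix.exists_mulVec_eq_zero_iff]
    set e : Fin Q → ℝ := fun m => if m = l then (π l)⁻¹ else 0 with he
    set c : Fin Q → ℝ := W⁻¹.mulVec e with hc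
    have hWc : W.mulVec c = e := by
      rw [hc, Matrix.mulVec_mulVec, Matrix.mul_nonsing_inv _ (isUnit_iff_ne_zero.mpr hWdet),
        Matrix.one_mulVec]
    refine ⟨Fin.snoc c (-1), ?_, ?_⟩
    · intro h
      have := congrFun h (Fin.last Q)
      simp at this
    · funext i
      have hsum : ∑ j : Fin Q, M i j * c j = τ l ^ (i : ℕ) := by
        have h1 : ∑ j : Fin Q, M i j * c j
            = ∑ m : Fin Q, τ m ^ (i : ℕ) * π m * (W.mulVec c) m := by
          simp only [hM, Matrix.of_apply, Finset.sum_mul]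
          rw [Finset.sum_comm]
          refine Finset.sum_congr rfl fun m _ => ?_
          rw [Matrix.mulVec, dotProduct, Finset.mul_sum]
          refine Finset.sum_congr rfl fun j _ => ?_
          simp [hW]
          ring
        rw [h1, hWc]
        have hterm : ∀ m : Fin Q, τ m ^ (i : ℕ) * π m * e m
            = if m = l then τ l ^ (i : ℕ) else 0 := by
          intro m
          by_cases hm : m = l
          · subst hm
            simp only [he, if_pos rfl]
            field_simp [(hπ m).ne']
            simp
          · simp [he, hm]
        rw [Finset.sum_congr rfl fun m _ => hterm m, Finset.sum_ite_eq' Finset.univ l]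
        simp
      simp only [Matrix.mulVec, dotProduct, Pi.zero_apply]
      rw [Fin.sum_univ_castSucc]
      simp only [Fin.snoc_castSucc, Fin.snoc_last]
      rw [hNlast]
      have : ∀ j : Fin Q, N (τ l) i j.castSucc * c j = M i j * c j := by
        intro j; rw [hNcast]
      rw [Finset.sum_congr rfl fun j _ => this j, hsum]
      ring
  refine ⟨hdeg, hroot, ?_⟩
  -- root characterization
  have hnatdeg : B.natDegree = Q := Polynomial.natDegree_eq_of_degree_eq_some hdeg
  set S : Multiset ℝ := Multiset.map τ Finset.univ.val with hS
  have hSnodup : S.Nodup := Multiset.Nodup.map hτ Finset.univ.nodup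
  have hSle : S ≤ B.roots := by
    rw [Multiset.le_iff_subset hSnodup]
    intro a ha
    rw [hS, Multiset.mem_map] at ha
    obtain ⟨l, _, rfl⟩ := ha
    exact Polynomial.mem_roots'.mpr ⟨hBne, hroot l⟩
  have hScard : Multiset.card S = Q := by simp [hS]
  have hrootscard : Multiset.card B.roots ≤ Q := hnatdeg ▸ B.card_roots' 
  have hSeq : S = B.roots := Multiset.eq_of_le_of_card_le hSle (hScard ▸ hrootscard)
  intro x
  constructor
  · intro hx
    have : x ∈ B.roots := Polynomial.mem_roots'.mpr ⟨hBne, hx⟩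
    rw [← hSeq, hS, Multiset.mem_map] at this
    obtain ⟨l, _, hl⟩ := this
    exact ⟨l, hl⟩
  · rintro ⟨l, rfl⟩
    exact hroot l
end
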